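/- Let g ∈ L∞(ℝ) be the 1-periodic function with g(t) = e^{−1/t} for t ∈ (0,1], and define the bounded linear map F : L¹(ℝ) → L¹(ℝ) by F(u) = g·u. Then F is injective, and for the curve γ(t) = χ_{[t,t+1]} one has ‖F(γ(t)) − F(γ(0))‖_{L¹} = 2∫₀ᵗ e^{−1/s} ds ≤ 2 t e^{−1/t} for t ∈ (0,1). Consequently, for every α ∈ (0,1], the quotient ‖F(γ(t)) − F(γ(0))‖_{L¹}^α / ‖γ(t) − γ(0)‖_{L¹} tends to 0 as t → 0⁺, so no α-Hölder stability estimate holds for F on the set {χ_{[t,t+1]} : t ∈ ℝ}. -/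

import Mathlib

open MeasureTheory Filter

noncomputable def g6 (t : ℝ) : ℝ :=
  if Int.fract t = 0 then Real.exp (-1) else Real.exp (-(1 / Int.fract t))

noncomputable def gamma6 (t : ℝ) : ℝ → ℝ :=
  Set.indicator (Set.Icc t (t + 1)) (fun _ => (1:ℝ))

lemma g6_pos (x : ℝ) : 0 < g6 x := by
  unfold g6; split <;> exact Real.exp_pos _

lemma g6_le_one (x : ℝ) : g6 x ≤ 1 := by
  unfold g6
  split
  · exact Real.exp_le_one_iff.2 (by norm_num)
  · rename_i h
    have h0 : 0 < Int.fract x := lt_of_le_of_ne (Int.fract_nonneg x) (Ne.symm h)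
    exact Real.exp_le_one_iff.2 (by  have := one_div_pos.2 h0; linarith)

lemma g6_meas : Measurable g6 := by
  unfold g6
  apply Measurable.ite
  · exact (measurable_fract (R := ℝ)) (measurableSet_singleton 0)
  · exact measurable_const
  · exact Real.measurable_exp.comp ((measurable_const.div (measurable_fract (R := ℝ))).neg)

lemma g6_intOn {s : Set ℝ} (hs : volume s ≠ ⊤) : IntegrableOn g6 s := by
  apply Measure.integrableOn_of_bounded hs g6_meas.aestronglyMeasurable (M := 1)
  filter_upwards with x
  rw [Real.norm_eq_abs, abs_of_pos (g6_pos x)]; exact g6_le_one x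

lemma abs_diff_eq {t : ℝ} (ht : t ∈ Set.Ioo (0:ℝ) 1) (x : ℝ) :
    |gamma6 t x - gamma6 0 x| =
      Set.indicator (Set.Ico 0 t ∪ Set.Ioc 1 (t+1)) (fun _ => (1:ℝ)) x := by
  obtain ⟨ht0, ht1⟩ := ht
  unfold gamma6
  simp only [Set.indicator_apply, Set.mem_Icc, Set.mem_union, Set.mem_Ico, Set.mem_Ioc,
    zero_add]
  split_ifs with h1 h2 h3 h3 h2 h3 h3
  · exfalso; rcases h3 with ⟨_, h⟩ | ⟨h, _⟩ <;> linarith [h1.1, h2.2]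
  · norm_num
  · norm_num
  · exfalso
    push_neg at h2
    exact h3 (Or.inr ⟨h2 (by linarith [h1.1]), h1.2⟩)
  · norm_num
  · exfalso
    by_cases hxt : x < t
    · exact h3 (Or.inl ⟨h2.1, hxt⟩)
    · push_neg at hxt
      exact h1 ⟨hxt, by linarith [h2.2]⟩
  · exfalso
    rcases h3 with ⟨ha, hb⟩ | ⟨ha, hb⟩
    · exact h2 ⟨ha, by linarith⟩
    · exact h1 ⟨by linarith, hb⟩
  · norm_num

lemma abs_g_diff_eq {t : ℝ} (ht : t ∈ Set.Ioo (0:ℝ) 1) (x : ℝ) :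
    |g6 x * (gamma6 t x - gamma6 0 x)| =
      Set.indicator (Set.Ico 0 t ∪ Set.Ioc 1 (t+1)) g6 x := by
  rw [abs_mul, abs_of_pos (g6_pos x), abs_diff_eq ht x]
  by_cases hx : x ∈ Set.Ico 0 t ∪ Set.Ioc 1 (t+1) <;> simp [hx]

lemma disj (t : ℝ) (ht1 : t ≤ 1) : Disjoint (Set.Ico (0:ℝ) t) (Set.Ioc 1 (t+1)) := by
  rw [Set.disjoint_left]
  rintro x ⟨_, h2⟩ ⟨h3, _⟩
  linarith

lemma vol_Ico_ne_top (a b : ℝ) : volume (Set.Ico a b) ≠ ⊤ := by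
  rw [Real.volume_Ico]; exact ENNReal.ofReal_ne_top

lemma vol_Ioc_ne_top (a b : ℝ) : volume (Set.Ioc a b) ≠ ⊤ := by
  rw [Real.volume_Ioc]; exact ENNReal.ofReal_ne_top

lemma exp_meas : Measurable (fun s : ℝ => Real.exp (-(1/s))) :=
  Real.measurable_exp.comp (measurable_const.div measurable_id).neg

lemma intOn_exp (b : ℝ) : IntegrableOn (fun s : ℝ => Real.exp (-(1/s))) (Set.Ioc 0 b) := by
  apply Measure.integrableOn_of_bounded (vol_Ioc_ne_top 0 b) exp_meas.aestronglyMeasurable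
    (M := 1)
  rw [ae_restrict_iff' measurableSet_Ioc]
  filter_upwards with x hx
  rw [Real.norm_eq_abs, abs_of_pos (Real.exp_pos _)]
  apply Real.exp_le_one_iff.2
  have := one_div_pos.2 hx.1
  linarith

lemma num_eq {t : ℝ} (ht : t ∈ Set.Ioo (0:ℝ) 1) :
    (∫ x : ℝ, |g6 x * (gamma6 t x - gamma6 0 x)|) =
      2 * ∫ s in (0:ℝ)..t, Real.exp (-(1 / s)) := by
  obtain ⟨ht0, ht1⟩ := ht
  simp only [abs_g_diff_eq ⟨ht0, ht1⟩]
  rw [integral_indicator (measurableSet_Ico.union measurableSet_Ioc),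
    setIntegral_union (disj t ht1.le) measurableSet_Ioc (g6_intOn (vol_Ico_ne_top 0 t))
      (g6_intOn (vol_Ioc_ne_top 1 (t+1)))]
  have h1 : ∫ x in Set.Ico (0:ℝ) t, g6 x = ∫ s in (0:ℝ)..t, Real.exp (-(1 / s)) := by
    rw [integral_Ico_eq_integral_Ioo,
      setIntegral_congr_fun measurableSet_Ioo
        (g := fun s : ℝ => Real.exp (-(1/s)))
        (fun x hx => by
          unfold g6
          have hfr : Int.fract x = x := Int.fract_eq_self.2 ⟨hx.1.le, hx.2.trans ht1⟩
          rw [hfr, if_neg (by exact ne_of_gt hx.1)]),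
      ← integral_Ioc_eq_integral_Ioo, intervalIntegral.integral_of_le ht0.le]
  have h2 : ∫ x in Set.Ioc (1:ℝ) (t+1), g6 x = ∫ s in (0:ℝ)..t, Real.exp (-(1 / s)) := by
    have hcong : ∫ x in Set.Ioc (1:ℝ) (t+1), g6 x
        = ∫ x in Set.Ioc (1:ℝ) (t+1), Real.exp (-(1/(x - 1))) := by
      apply setIntegral_congr_fun measurableSet_Ioc
      intro x hx
      unfold g6
      have hx1 : (0:ℝ) ≤ x - 1 := by linarith [hx.1]
      have hx2 : x - 1 < 1 := by linarith [hx.2]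
      have hfr : Int.fract x = x - 1 := by
        have : Int.fract (x - 1 + (1:ℤ)) = Int.fract (x - 1) := Int.fract_add_intCast (x-1) 1
        simpa [Int.fract_eq_self.2 ⟨hx1, hx2⟩] using this
      rw [hfr, if_neg (by nlinarith [hx.1] : x - 1 ≠ 0)]
    rw [hcong, ← intervalIntegral.integral_of_le (by linarith : (1:ℝ) ≤ t+1)]
    have := intervalIntegral.integral_comp_sub_right (a := 1) (b := t+1)
      (fun s : ℝ => Real.exp (-(1/s))) 1
    simpa using this
  rw [h1, h2]; ring

lemma num_le {t : ℝ} (ht : t ∈ Set.Ioo (0:ℝ) 1) :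
    (∫ x : ℝ, |g6 x * (gamma6 t x - gamma6 0 x)|) ≤ 2 * t * Real.exp (-(1 / t)) := by
  obtain ⟨ht0, ht1⟩ := ht
  rw [num_eq ⟨ht0, ht1⟩]
  have h : ∫ s in (0:ℝ)..t, Real.exp (-(1 / s)) ≤ t * Real.exp (-(1/t)) := by
    rw [intervalIntegral.integral_of_le ht0.le]
    calc ∫ s in Set.Ioc (0:ℝ) t, Real.exp (-(1/s))
        ≤ ∫ _ in Set.Ioc (0:ℝ) t, Real.exp (-(1/t)) := by
          apply setIntegral_mono_on (intOn_exp t) (integrableOn_const ?_)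
            measurableSet_Ioc
          · intro x hx
            apply Real.exp_le_exp.2
            have := one_div_le_one_div_of_le hx.1 hx.2
            linarith
          · rw [Real.volume_Ioc]; exact ENNReal.ofReal_ne_top
      _ = t * Real.exp (-(1/t)) := by
          rw [setIntegral_const, measureReal_def, Real.volume_Ioc, smul_eq_mul,
            ENNReal.toReal_ofReal (by linarith)]
          norm_num
  linarith

lemma den_eq {t : ℝ} (ht : t ∈ Set.Ioo (0:ℝ) 1) :
    (∫ x : ℝ, |gamma6 t x - gamma6 0 x|) = 2 * t := by
  obtain ⟨ht0, ht1⟩ := ht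
  simp only [abs_diff_eq ⟨ht0, ht1⟩]
  rw [integral_indicator (measurableSet_Ico.union measurableSet_Ioc), setIntegral_const,
    measureReal_def, measure_union (disj t ht1.le) measurableSet_Ioc, Real.volume_Ico, Real.volume_Ioc,
    ← ENNReal.ofReal_add (by linarith) (by linarith), smul_eq_mul, mul_one,
    ENNReal.toReal_ofReal (by linarith)]
  ring

lemma exp_neg_le {y : ℝ} (hy : 0 < y) : Real.exp (-y) ≤ 4 / y^2 := by
  have h1 : y/2 ≤ Real.exp (y/2) := by linarith [Real.add_one_le_exp (y/2)]
  have h2 : y^2/4 ≤ Real.exp y := by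
    have hm := mul_le_mul h1 h1 (by linarith) (Real.exp_pos _).le
    rw [← Real.exp_add, show y/2 + y/2 = y by ring] at hm
    nlinarith
  have h3 := one_div_le_one_div_of_le (by positivity) h2
  rw [one_div_div] at h3
  rw [Real.exp_neg, ← one_div]
  exact h3

lemma exp_rpow' (a b : ℝ) : Real.exp a ^ b = Real.exp (a * b) := by
  rw [Real.rpow_def_of_pos (Real.exp_pos a), Real.log_exp]

lemma hN0 (t : ℝ) : 0 ≤ ∫ x : ℝ, |g6 x * (gamma6 t x - gamma6 0 x)| :=
  integral_nonneg fun x => abs_nonneg _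

lemma tendsto6 {α : ℝ} (hα : α ∈ Set.Ioc (0:ℝ) 1) :
    Tendsto (fun t : ℝ =>
        (∫ x : ℝ, |g6 x * (gamma6 t x - gamma6 0 x)|) ^ α /
          (∫ x : ℝ, |gamma6 t x - gamma6 0 x|))
      (nhdsWithin 0 (Set.Ioi 0)) (nhds 0) := by
  obtain ⟨hα0, hα1⟩ := hα
  have hmem := Ioo_mem_nhdsGT_of_mem (show (0:ℝ) ∈ Set.Ico 0 1 by norm_num)
  apply squeeze_zero' (g := fun t => (2 ^ α * 2 / α ^ 2) * t)
  · filter_upwards [hmem] with t ht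
    exact div_nonneg (Real.rpow_nonneg (hN0 t) α)
      (by rw [den_eq ht]; linarith [ht.1])
  · filter_upwards [hmem] with t ht
    obtain ⟨ht0, ht1⟩ := ht
    rw [den_eq ⟨ht0, ht1⟩]
    set N := ∫ x : ℝ, |g6 x * (gamma6 t x - gamma6 0 x)| with hNdef
    have hE := Real.exp_pos (-(1/t))
    have key : N ^ α ≤ 2 ^ α * (4 * t^2 / α^2) := by
      calc N ^ α ≤ (2 * t * Real.exp (-(1/t))) ^ α :=
            Real.rpow_le_rpow (hN0 t) (num_le ⟨ht0, ht1⟩) hα0.le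
        _ = (2*t) ^ α * Real.exp (-(1/t)) ^ α := Real.mul_rpow (by linarith) hE.le
        _ ≤ 2 ^ α * (4 * t^2 / α^2) := by
            apply mul_le_mul
            · exact Real.rpow_le_rpow (by linarith) (by linarith) hα0.le
            · rw [exp_rpow']
              have hb := exp_neg_le (y := α/t) (by positivity)
              have heq : (4:ℝ) / (α/t)^2 = 4 * t^2 / α^2 := by
                field_simp
              rw [heq] at hb
              calc Real.exp (-(1/t) * α) = Real.exp (-(α/t)) := by ring_nf
                _ ≤ 4 * t^2 / α^2 := hb
            · positivity
            · positivity
    rw [div_le_iff₀ (by linarith : (0:ℝ) < 2*t)]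
    have heq2 : 2 ^ α * (4 * t^2 / α^2) = 2 ^ α * 2 / α ^ 2 * t * (2*t) := by
      field_simp; ring
    linarith [heq2 ▸ key]
  · have : Tendsto (fun t : ℝ => (2 ^ α * 2 / α ^ 2) * t) (nhds 0) (nhds 0) := by
      exact (continuous_mul_left (2 ^ α * 2 / α ^ 2 : ℝ)).tendsto' 0 0 (by simp)
    exact this.mono_left nhdsWithin_le_nhds

theorem stmt6 :
    (∀ u : ℝ → ℝ, Integrable u → (∀ᵐ x : ℝ, g6 x * u x = 0) → (∀ᵐ x : ℝ, u x = 0)) ∧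
    (∀ t ∈ Set.Ioo (0:ℝ) 1,
      (∫ x : ℝ, |g6 x * (gamma6 t x - gamma6 0 x)|) =
          2 * ∫ s in (0:ℝ)..t, Real.exp (-(1 / s)) ∧
      (∫ x : ℝ, |g6 x * (gamma6 t x - gamma6 0 x)|) ≤ 2 * t * Real.exp (-(1 / t))) ∧
    (∀ α ∈ Set.Ioc (0:ℝ) 1,
      Tendsto (fun t : ℝ =>
          (∫ x : ℝ, |g6 x * (gamma6 t x - gamma6 0 x)|) ^ α /
            (∫ x : ℝ, |gamma6 t x - gamma6 0 x|))
        (nhdsWithin 0 (Set.Ioi 0)) (nhds 0) ∧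
      ¬ ∃ C > (0:ℝ), ∀ s t : ℝ,
          (∫ x : ℝ, |gamma6 s x - gamma6 t x|) ≤
            C * (∫ x : ℝ, |g6 x * (gamma6 s x - gamma6 t x)|) ^ α) := by
  refine ⟨?_, ?_, ?_⟩
  · intro u _ hu
    filter_upwards [hu] with x hx
    rcases mul_eq_zero.1 hx with h | h
    · exact absurd h (ne_of_gt (g6_pos x))
    · exact h
  · intro t ht
    exact ⟨num_eq ht, num_le ht⟩
  · intro α hα
    refine ⟨tendsto6 hα, ?_⟩
    rintro ⟨C, hC, h⟩
    have htd := tendsto6 hα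
    have hev1 : ∀ᶠ t in nhdsWithin (0:ℝ) (Set.Ioi 0),
        (∫ x : ℝ, |g6 x * (gamma6 t x - gamma6 0 x)|) ^ α /
          (∫ x : ℝ, |gamma6 t x - gamma6 0 x|) < 1 / C :=
      htd.eventually_lt_const (by positivity)
    have hev2 := Ioo_mem_nhdsGT_of_mem (show (0:ℝ) ∈ Set.Ico 0 1 by norm_num)
    obtain ⟨t, hlt, ht⟩ := (hev1.and (Filter.eventually_mem_set.2 hev2)).exists
    have hD := den_eq ht
    have hineq := h t 0
    rw [hD] at hineq hlt
    set N := ∫ x : ℝ, |g6 x * (gamma6 t x - gamma6 0 x)|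
    have ht0 := ht.1
    have h2t : (0:ℝ) < 2 * t := by linarith
    rw [div_lt_div_iff₀ h2t hC] at hlt
    nlinarith [Real.rpow_nonneg (hN0 t) α]
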